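/- Let X be a standardized 3-Dirac mixture with ordered locations μ_1 < μ_2 < μ_3, probabilities ε_1, ε_2, ε_3 > 0 summing to 1, let s* denote the smallest minimizer of s ↦ Var|X − s|, and set α_2 = ε_1μ_1 + ε_2μ_2, η_2 = ε_1 + ε_2, and s_2 = (α_2/2)(1/η_2 − 1/(1−η_2)). Then (s* ∈ [μ_1, μ_2] and s_2 ≥ μ_2) holds if and only if μ_1 ∈ [U_1, U_2], where U_1 = −((2ε_2 + 4ε_1ε_3)/√(4ε_1ε_3(ε_2 + 4ε_1ε_3)))·√(ε_3/(1−ε_3)) and U_2 = −(√2/2)·√((1−ε_1)/ε_1 + √((1−ε_1)/ε_1)·√(ε_3/(1−ε_3))). -/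

import Mathlib

open MeasureTheory ProbabilityTheory

private lemma unsq19 {x y : ℝ} (hx : 0 ≤ x) (hy : 0 ≤ y) (h : x ^ 2 ≤ y ^ 2) : x ≤ y := by
  have h' := Real.sqrt_le_sqrt h
  rwa [Real.sqrt_sq hx, Real.sqrt_sq hy] at h'

private lemma eqsq19 {x y : ℝ} (hx : 0 ≤ x) (hy : 0 ≤ y) (h : x ^ 2 = y ^ 2) : x = y := by
  rw [← Real.sqrt_sq hx, h, Real.sqrt_sq hy]

private lemma sign19 {x y z : ℝ} (h : x = y * z) (hz : 0 < z) : 0 ≤ x ↔ 0 ≤ y := by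
  constructor
  · intro hx
    by_contra hy
    push_neg at hy
    nlinarith [mul_pos (neg_pos.2 hy) hz]
  · intro hy
    rw [h]
    exact mul_nonneg hy hz.le

set_option maxHeartbeats 1000000 in
theorem stmt_19 (ε₁ ε₂ ε₃ μ₁ μ₂ μ₃ : ℝ)
    (hε₁ : 0 < ε₁) (hε₂ : 0 < ε₂) (hε₃ : 0 < ε₃) (hsum : ε₁ + ε₂ + ε₃ = 1)
    (h12 : μ₁ < μ₂) (h23 : μ₂ < μ₃)
    (P : Measure ℝ)
    (hP : P = ENNReal.ofReal ε₁ • Measure.dirac μ₁ + ENNReal.ofReal ε₂ • Measure.dirac μ₂ +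
      ENNReal.ofReal ε₃ • Measure.dirac μ₃)
    (hmean : ∫ x, x ∂P = 0) (hm2 : ∫ x, x ^ 2 ∂P = 1)
    (sstar : ℝ)
    (hmin : ∀ s : ℝ, variance (fun x => |x - sstar|) P ≤ variance (fun x => |x - s|) P)
    (hleast : ∀ t : ℝ,
      (∀ s : ℝ, variance (fun x => |x - t|) P ≤ variance (fun x => |x - s|) P) → sstar ≤ t)
    (α₂ η₂ s₂ : ℝ)
    (hα₂ : α₂ = ε₁ * μ₁ + ε₂ * μ₂) (hη₂ : η₂ = ε₁ + ε₂)
    (hs₂ : s₂ = α₂ / 2 * (1 / η₂ - 1 / (1 - η₂))) :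
    (sstar ∈ Set.Icc μ₁ μ₂ ∧ μ₂ ≤ s₂) ↔
      μ₁ ∈ Set.Icc
        (-((2 * ε₂ + 4 * ε₁ * ε₃) / Real.sqrt (4 * ε₁ * ε₃ * (ε₂ + 4 * ε₁ * ε₃))) *
          Real.sqrt (ε₃ / (1 - ε₃)))
        (-(Real.sqrt 2 / 2) * Real.sqrt ((1 - ε₁) / ε₁ +
          Real.sqrt ((1 - ε₁) / ε₁) * Real.sqrt (ε₃ / (1 - ε₃)))) := by
  have hb : ε₂ = 1 - ε₁ - ε₃ := by linarith
  subst hb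
  -- ## Measure-theoretic reduction
  have hdir : ∀ (f : ℝ → ℝ) (x : ℝ), Integrable f (Measure.dirac x) := by
    intro f x
    refine (integrable_const (f x)).congr ?_
    rw [Filter.EventuallyEq, ae_dirac_eq]
    exact Filter.eventually_pure.2 rfl
  have key : ∀ f : ℝ → ℝ, ∫ x, f x ∂P = ε₁ * f μ₁ + (1 - ε₁ - ε₃) * f μ₂ + ε₃ * f μ₃ := by
    intro f
    rw [hP, integral_add_measure (((hdir f μ₁).smul_measure ENNReal.ofReal_ne_top).add_measure
        ((hdir f μ₂).smul_measure ENNReal.ofReal_ne_top))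
        ((hdir f μ₃).smul_measure ENNReal.ofReal_ne_top),
      integral_add_measure ((hdir f μ₁).smul_measure ENNReal.ofReal_ne_top)
        ((hdir f μ₂).smul_measure ENNReal.ofReal_ne_top),
      integral_smul_measure, integral_smul_measure, integral_smul_measure,
      integral_dirac, integral_dirac, integral_dirac,
      ENNReal.toReal_ofReal hε₁.le, ENNReal.toReal_ofReal hε₂.le,
      ENNReal.toReal_ofReal hε₃.le]
    simp [smul_eq_mul]
  have hint : ∀ f : ℝ → ℝ, Integrable f P := by
    intro f; rw [hP]
    exact (((hdir f μ₁).smul_measure ENNReal.ofReal_ne_top).add_measure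
      ((hdir f μ₂).smul_measure ENNReal.ofReal_ne_top)).add_measure
      ((hdir f μ₃).smul_measure ENNReal.ofReal_ne_top)
  have hprob : IsProbabilityMeasure P := by
    constructor
    rw [hP]
    simp only [Measure.coe_add, Measure.coe_smul, Pi.add_apply, Pi.smul_apply,
      Measure.dirac_apply_of_mem (Set.mem_univ _), smul_eq_mul, mul_one]
    rw [← ENNReal.ofReal_add hε₁.le hε₂.le, ← ENNReal.ofReal_add (by positivity) hε₃.le, hsum,
      ENNReal.ofReal_one]
  have h1 : ε₁ * μ₁ + (1 - ε₁ - ε₃) * μ₂ + ε₃ * μ₃ = 0 := (key fun x => x).symm.trans hmean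
  have h2 : ε₁ * μ₁ ^ 2 + (1 - ε₁ - ε₃) * μ₂ ^ 2 + ε₃ * μ₃ ^ 2 = 1 :=
    (key fun x => x ^ 2).symm.trans hm2
  have hmem : ∀ s : ℝ, MemLp (fun x => |x - s|) 2 P := by
    intro s
    refine (memLp_two_iff_integrable_sq ?_).2 (hint _)
    exact (continuous_abs.comp (continuous_id.sub continuous_const)).aestronglyMeasurable
  set J : ℝ → ℝ := fun s => ε₁ * |μ₁ - s| + (1 - ε₁ - ε₃) * |μ₂ - s| + ε₃ * |μ₃ - s|
    with hJdef
  have hVar : ∀ s : ℝ, variance (fun x => |x - s|) P = 1 + s ^ 2 - (J s) ^ 2 := by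
    intro s
    rw [variance_eq_sub (hmem s)]
    have e2 : (∫ x, ((fun x => |x - s|) ^ 2) x ∂P) = 1 + s ^ 2 := by
      simp only [Pi.pow_apply]
      rw [key fun x => |x - s| ^ 2]
      rw [sq_abs, sq_abs, sq_abs]
      linear_combination h2 - 2 * s * h1
    have e1 : (∫ x, |x - s| ∂P) = J s := by
      simp only [hJdef]
      exact key fun x => |x - s|
    rw [e2, e1]
  have hmin2 : ∀ s : ℝ, (J s) ^ 2 - s ^ 2 ≤ (J sstar) ^ 2 - sstar ^ 2 := by
    intro s
    have h := hmin s
    rw [hVar, hVar] at h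
    linarith
  have hleast2 : ∀ t : ℝ, (∀ s : ℝ, (J s) ^ 2 - s ^ 2 ≤ (J t) ^ 2 - t ^ 2) → sstar ≤ t := by
    intro t h
    refine hleast t fun s => ?_
    rw [hVar, hVar]
    have := h s
    linarith
  clear hmin hleast hVar hmem hint key hdir hmean hm2 hP
  -- ## Basic positivity and sign facts
  have h1a : (0:ℝ) < 1 - ε₁ := by linarith
  have h1c : (0:ℝ) < 1 - ε₃ := by linarith
  have hμ₁neg : μ₁ < 0 := by
    by_contra hcon
    push_neg at hcon
    linarith [mul_lt_mul_of_pos_left h12 hε₂, mul_lt_mul_of_pos_left (h12.trans h23) hε₃,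
      mul_nonneg hε₁.le hcon, mul_nonneg hε₂.le hcon, mul_nonneg hε₃.le hcon, h1]
  have hμ₃pos : 0 < μ₃ := by
    by_contra hcon
    push_neg at hcon
    linarith [mul_lt_mul_of_pos_left h23 hε₂, mul_lt_mul_of_pos_left (h12.trans h23) hε₁,
      mul_nonpos_of_nonneg_of_nonpos hε₃.le hcon, mul_nonpos_of_nonneg_of_nonpos hε₂.le hcon,
      mul_nonpos_of_nonneg_of_nonpos hε₁.le hcon, h1]
  -- ## Piecewise formulas for J
  have hI0 : ∀ s : ℝ, s ≤ μ₁ → J s = -s := by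
    intro s hs
    simp only [hJdef]
    rw [abs_of_nonneg (by linarith : (0:ℝ) ≤ μ₁ - s),
      abs_of_nonneg (by linarith : (0:ℝ) ≤ μ₂ - s), abs_of_nonneg (by linarith : (0:ℝ) ≤ μ₃ - s)]
    linear_combination h1
  have hIa : ∀ s : ℝ, μ₁ ≤ s → s ≤ μ₂ → J s = (2 * ε₁ - 1) * s - 2 * ε₁ * μ₁ := by
    intro s hs hs'
    simp only [hJdef]
    rw [abs_of_nonpos (by linarith : μ₁ - s ≤ 0),
      abs_of_nonneg (by linarith : (0:ℝ) ≤ μ₂ - s), abs_of_nonneg (by linarith : (0:ℝ) ≤ μ₃ - s)]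
    linear_combination h1
  have hIb : ∀ s : ℝ, μ₂ ≤ s → s ≤ μ₃ → J s = (1 - 2 * ε₃) * s + 2 * ε₃ * μ₃ := by
    intro s hs hs'
    simp only [hJdef]
    rw [abs_of_nonpos (by linarith : μ₁ - s ≤ 0),
      abs_of_nonpos (by linarith : μ₂ - s ≤ 0), abs_of_nonneg (by linarith : (0:ℝ) ≤ μ₃ - s)]
    linear_combination -h1
  have hI3 : ∀ s : ℝ, μ₃ ≤ s → J s = s := by
    intro s hs
    simp only [hJdef]
    rw [abs_of_nonpos (by linarith : μ₁ - s ≤ 0),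
      abs_of_nonpos (by linarith : μ₂ - s ≤ 0), abs_of_nonpos (by linarith : μ₃ - s ≤ 0)]
    linear_combination -h1
  -- ## Parabola bounds
  have hGa : ∀ s : ℝ, μ₁ ≤ s → s ≤ μ₂ → (1 - ε₁) * ((J s) ^ 2 - s ^ 2) ≤ ε₁ * μ₁ ^ 2 := by
    intro s hs hs'
    rw [hIa s hs hs']
    linarith [mul_nonneg hε₁.le (sq_nonneg (2 * (1 - ε₁) * s - (1 - 2 * ε₁) * μ₁)),
      sq_nonneg (2 * (1 - ε₁) * s - (1 - 2 * ε₁) * μ₁)]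
  have hGb : ∀ s : ℝ, μ₂ ≤ s → s ≤ μ₃ → (1 - ε₃) * ((J s) ^ 2 - s ^ 2) ≤ ε₃ * μ₃ ^ 2 := by
    intro s hs hs'
    rw [hIb s hs hs']
    linarith [mul_nonneg hε₃.le (sq_nonneg (2 * (1 - ε₃) * s - (1 - 2 * ε₃) * μ₃)),
      sq_nonneg (2 * (1 - ε₃) * s - (1 - 2 * ε₃) * μ₃)]
  have hG0 : ∀ s : ℝ, s ≤ μ₁ → (J s) ^ 2 - s ^ 2 = 0 := by
    intro s hs; rw [hI0 s hs]; ring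
  have hG3 : ∀ s : ℝ, μ₃ ≤ s → (J s) ^ 2 - s ^ 2 = 0 := by
    intro s hs; rw [hI3 s hs]; ring
  -- ## s₂ normal form
  have hη : η₂ = 1 - ε₃ := by rw [hη₂]; ring
  have hα : α₂ = -(ε₃ * μ₃) := by rw [hα₂]; linarith
  have hs2' : 2 * (1 - ε₃) * s₂ = (1 - 2 * ε₃) * μ₃ := by
    rw [hs₂, hη, hα]
    have e : (1:ℝ) - (1 - ε₃) = ε₃ := by ring
    rw [e]
    field_simp
    ring
  have hs2le : s₂ ≤ μ₃ := by
    by_contra hcon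
    push_neg at hcon
    have := mul_lt_mul_of_pos_left hcon (by linarith : (0:ℝ) < 2 * (1 - ε₃))
    linarith [hs2', hμ₃pos]
  have hC1iff : μ₂ ≤ s₂ ↔ 2 * (1 - ε₃) * μ₂ ≤ (1 - 2 * ε₃) * μ₃ := by
    rw [← hs2']
    constructor
    · intro h
      exact mul_le_mul_of_nonneg_left h (by linarith)
    · intro h
      by_contra hcon
      push_neg at hcon
      have := mul_lt_mul_of_pos_left hcon (by linarith : (0:ℝ) < 2 * (1 - ε₃))
      linarith
  -- ## (★)
  have hstar : ε₁ * (1 - ε₃) * μ₁ ^ 2 + 2 * ε₁ * ε₃ * μ₁ * μ₃ + ε₃ * (1 - ε₁) * μ₃ ^ 2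
      = 1 - ε₁ - ε₃ := by
    linear_combination (1 - ε₁ - ε₃) * h2 + (ε₁ * μ₁ + ε₃ * μ₃ - (1 - ε₁ - ε₃) * μ₂) * h1
  -- ## square-root quantities
  set A := Real.sqrt (ε₁ * (1 - ε₃)) with hAdef
  set C := Real.sqrt (ε₃ * (1 - ε₁)) with hCdef
  have hA2 : A ^ 2 = ε₁ * (1 - ε₃) := Real.sq_sqrt (by positivity)
  have hC2 : C ^ 2 = ε₃ * (1 - ε₁) := Real.sq_sqrt (by positivity)
  have hApos : 0 < A := Real.sqrt_pos.2 (by positivity)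
  have hCpos : 0 < C := Real.sqrt_pos.2 (by positivity)
  obtain ⟨p, hpdef⟩ : ∃ p : ℝ, p = A * (-μ₁) := ⟨_, rfl⟩
  obtain ⟨q, hqdef⟩ : ∃ q : ℝ, q = C * μ₃ := ⟨_, rfl⟩
  obtain ⟨N', hN'⟩ : ∃ N' : ℝ, N' = (1 - ε₁) * (1 - ε₃) := ⟨_, rfl⟩
  obtain ⟨M', hM'⟩ : ∃ M' : ℝ, M' = A * C := ⟨_, rfl⟩
  have hNpos : 0 < N' := by rw [hN']; exact mul_pos h1a h1c
  have hMpos : 0 < M' := by rw [hM']; exact mul_pos hApos hCpos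
  have hppos : 0 < p := by rw [hpdef]; exact mul_pos hApos (by linarith only [hμ₁neg])
  have hqpos : 0 < q := by rw [hqdef]; exact mul_pos hCpos hμ₃pos
  have hp2 : p ^ 2 = ε₁ * (1 - ε₃) * μ₁ ^ 2 := by rw [hpdef, mul_pow, hA2]; ring
  have hq2 : q ^ 2 = ε₃ * (1 - ε₁) * μ₃ ^ 2 := by rw [hqdef, mul_pow, hC2]
  have hdagger : N' * (p ^ 2 + q ^ 2) - 2 * M' * (p * q) = (1 - ε₁ - ε₃) * N' := by
    rw [hN', hM', hpdef, hqdef]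
    linear_combination ((1 - ε₁) * (1 - ε₃)) * hstar
      + ((1 - ε₁) * (1 - ε₃) * μ₁ ^ 2 + 2 * ε₃ * (1 - ε₁) * μ₁ * μ₃) * hA2
      + ((1 - ε₁) * (1 - ε₃) * μ₃ ^ 2 + 2 * A ^ 2 * μ₁ * μ₃) * hC2
  have hNM2 : N' ^ 2 - M' ^ 2 = (1 - ε₁ - ε₃) * N' := by
    rw [hN', hM', mul_pow A C, hA2, hC2]; ring
  have hMN : M' < N' := by
    by_contra hcon
    push_neg at hcon
    have h'' := mul_le_mul hcon hcon hNpos.le hMpos.le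
    have h' : 0 < N' ^ 2 - M' ^ 2 := by rw [hNM2]; exact mul_pos hε₂ hNpos
    linarith only [h', h'']
  have hid : 2 * (N' - M') * p ^ 2 - (1 - ε₁ - ε₃) * N'
      = (p - q) * (N' * q + (N' - 2 * M') * p) := by
    linear_combination hdagger
  have haμ : -(ε₁ * μ₁) < (1 - ε₁) * μ₃ := by
    linarith only [mul_lt_mul_of_pos_left h23 hε₂, h1, mul_pos hε₃ hμ₃pos]
  have hkey : M' * p < N' * q := by
    have e1 : M' * p = ε₁ * (1 - ε₃) * (C * (-μ₁)) := by
      have e : M' * p = A ^ 2 * (C * (-μ₁)) := by rw [hM', hpdef]; ring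
      rw [e, hA2]
    have e2 : N' * q = (1 - ε₁) * (1 - ε₃) * (C * μ₃) := by rw [hN', hqdef]
    have e3 := mul_lt_mul_of_pos_left haμ (mul_pos h1c hCpos)
    rw [e1, e2]
    linarith only [e3]
  have hfac : 0 < N' * q + (N' - 2 * M') * p := by
    rcases le_total p q with h | h
    · rcases le_total N' (2 * M') with h' | h'
      · have h2'' := mul_le_mul_of_nonpos_left h (by linarith only [h'] : N' - 2 * M' ≤ 0)
        have h3'' := mul_pos hqpos (sub_pos.2 hMN)
        linarith only [h2'', h3'']
      · have h4'' := mul_nonneg (by linarith only [h'] : (0:ℝ) ≤ N' - 2 * M') hppos.le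
        linarith only [mul_pos hNpos hqpos, h4'']
    · have h4'' := mul_nonneg hNpos.le (sub_nonneg.2 h)
      linarith only [hkey, h4'']
  -- ## core algebraic equivalence (ii)
  have hC2iff : ε₃ * (1 - ε₁) * μ₃ ^ 2 ≤ ε₁ * (1 - ε₃) * μ₁ ^ 2 ↔
      N' + M' ≤ 2 * (ε₁ * (1 - ε₃)) * μ₁ ^ 2 := by
    constructor
    · intro h
      have hqp : q ≤ p := unsq19 hqpos.le hppos.le (by rw [hp2, hq2]; exact h)
      have h3 : 0 ≤ (p - q) * (N' * q + (N' - 2 * M') * p) :=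
        mul_nonneg (by linarith only [hqp]) hfac.le
      by_contra hcon
      push_neg at hcon
      have hcon' : 2 * p ^ 2 < N' + M' := by linarith only [hp2, hcon]
      have h8 := mul_lt_mul_of_pos_left hcon' (sub_pos.2 hMN)
      linarith only [hid, h3, hNM2, h8]
    · intro h
      have h8 := mul_le_mul_of_nonneg_left
        (by linarith only [hp2, h] : N' + M' ≤ 2 * p ^ 2) (sub_pos.2 hMN).le
      have h4 : 0 ≤ (p - q) * (N' * q + (N' - 2 * M') * p) := by
        linarith only [hid, hNM2, h8]
      have hqp : q ≤ p := by
        by_contra hcon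
        push_neg at hcon
        have h9 := mul_pos (sub_pos.2 hcon) hfac
        linarith only [h4, h9]
      have h9 := mul_le_mul hqp hqp hqpos.le hppos.le
      linarith only [h9, hp2, hq2]
  -- ## bridge for U₂
  have ht2 : (Real.sqrt (ε₃ / (1 - ε₃))) ^ 2 = ε₃ / (1 - ε₃) := Real.sq_sqrt (by positivity)
  have hu2 : (Real.sqrt ((1 - ε₁) / ε₁)) ^ 2 = (1 - ε₁) / ε₁ := Real.sq_sqrt (by positivity)
  have hMut : ε₁ * (1 - ε₃) * (Real.sqrt ((1 - ε₁) / ε₁) * Real.sqrt (ε₃ / (1 - ε₃))) = M' := by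
    rw [hM']
    refine eqsq19 (by positivity) (by positivity) ?_
    rw [mul_pow, mul_pow (Real.sqrt _) (Real.sqrt _), hu2, ht2, mul_pow A C, hA2, hC2]
    field_simp
  have hinner0 : 0 ≤ (1 - ε₁) / ε₁ + Real.sqrt ((1 - ε₁) / ε₁) * Real.sqrt (ε₃ / (1 - ε₃)) := by
    positivity
  have hEi : ε₁ * (1 - ε₃) * ((1 - ε₁) / ε₁ + Real.sqrt ((1 - ε₁) / ε₁)
      * Real.sqrt (ε₃ / (1 - ε₃))) = N' + M' := by
    rw [mul_add, hMut, hN']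
    have e : ε₁ * (1 - ε₃) * ((1 - ε₁) / ε₁) = (1 - ε₁) * (1 - ε₃) := by
      field_simp
    rw [e]
  have hU2iff : μ₁ ≤ -(Real.sqrt 2 / 2) * Real.sqrt ((1 - ε₁) / ε₁ +
        Real.sqrt ((1 - ε₁) / ε₁) * Real.sqrt (ε₃ / (1 - ε₃))) ↔
      N' + M' ≤ 2 * (ε₁ * (1 - ε₃)) * μ₁ ^ 2 := by
    constructor
    · intro h
      have h1' : Real.sqrt 2 / 2 * Real.sqrt ((1 - ε₁) / ε₁ +
          Real.sqrt ((1 - ε₁) / ε₁) * Real.sqrt (ε₃ / (1 - ε₃))) ≤ -μ₁ := by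
        linarith only [h]
      have h2' := pow_le_pow_left₀ (by positivity) h1' 2
      rw [mul_pow, div_pow, Real.sq_sqrt (by norm_num : (0:ℝ) ≤ 2), Real.sq_sqrt hinner0] at h2'
      have h3' := mul_le_mul_of_nonneg_left h2' (mul_pos hε₁ h1c).le
      linarith only [h3', hEi]
    · intro h
      have hinn : (1 - ε₁) / ε₁ + Real.sqrt ((1 - ε₁) / ε₁) * Real.sqrt (ε₃ / (1 - ε₃))
          ≤ 2 * μ₁ ^ 2 := by
        by_contra hcon
        push_neg at hcon
        have h9 := mul_lt_mul_of_pos_left hcon (mul_pos hε₁ h1c)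
        linarith only [hEi, h, h9]
      have h5 := Real.sqrt_le_sqrt hinn
      have h2s : Real.sqrt (2 * μ₁ ^ 2) = Real.sqrt 2 * (-μ₁) := by
        rw [Real.sqrt_mul (by norm_num : (0:ℝ) ≤ 2), Real.sqrt_sq_eq_abs, abs_of_neg hμ₁neg]
      rw [h2s] at h5
      have h4' : Real.sqrt 2 * Real.sqrt 2 = 2 := Real.mul_self_sqrt (by norm_num)
      have h6' := mul_le_mul_of_nonneg_left h5 (by positivity : (0:ℝ) ≤ Real.sqrt 2 / 2)
      have h7' : Real.sqrt 2 / 2 * (Real.sqrt 2 * (-μ₁)) = -μ₁ := by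
        rw [show Real.sqrt 2 / 2 * (Real.sqrt 2 * (-μ₁))
          = Real.sqrt 2 * Real.sqrt 2 * (-μ₁) / 2 by ring, h4']
        ring
      rw [h7'] at h6'
      linarith only [h6']
  -- ## bridge for U₁
  obtain ⟨K, hK⟩ : ∃ K : ℝ, K = 2 * (1 - ε₁ - ε₃) + 4 * ε₁ * ε₃ := ⟨_, rfl⟩
  obtain ⟨SS, hSS⟩ : ∃ SS : ℝ, SS = 4 * ε₁ * ε₃ * (1 - ε₁ - ε₃ + 4 * ε₁ * ε₃) := ⟨_, rfl⟩
  have hKpos : 0 < K := by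
    rw [hK]; linarith only [mul_pos hε₁ hε₃, hε₂]
  have hSSpos : 0 < SS := by
    rw [hSS]
    exact mul_pos (mul_pos (mul_pos (by norm_num) hε₁) hε₃)
      (by linarith only [mul_pos hε₁ hε₃, hε₂])
  have hSqpos : 0 < Real.sqrt SS := Real.sqrt_pos.2 hSSpos
  have hSq2 : (Real.sqrt SS) ^ 2 = SS := Real.sq_sqrt hSSpos.le
  have hW : (0:ℝ) < (1 - ε₁ + 2 * ε₁ * ε₃) * μ₃ - 2 * ε₁ * ε₃ * μ₂ := by
    linarith only [mul_pos (mul_pos hε₁ hε₃) (sub_pos.2 h23), mul_pos h1a hμ₃pos]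
  have hbe : (0:ℝ) < 4 * (1 - ε₁ - ε₃) * ε₃ ^ 2 :=
    mul_pos (by linarith only [hε₂]) (pow_pos hε₃ 2)
  have hidE : K ^ 2 * ε₃ - SS * (1 - ε₃) * μ₁ ^ 2
      = ((1 - 2 * ε₃) * μ₃ - 2 * (1 - ε₃) * μ₂)
        * (4 * (1 - ε₁ - ε₃) * ε₃ ^ 2 * ((1 - ε₁ + 2 * ε₁ * ε₃) * μ₃ - 2 * ε₁ * ε₃ * μ₂)) := by
    rw [hK, hSS]
    linear_combination (4 * ε₃ * ((1 - ε₁ - ε₃) + 4 * ε₁ * ε₃ * (1 - ε₃))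
        * ((1 - ε₁ - ε₃) * μ₂ + ε₃ * μ₃ - ε₁ * μ₁)) * h1
      + (4 * ε₃ * ((1 - ε₁ - ε₃) + 4 * ε₁ * ε₃ * (1 - ε₃)) * ε₁
        - 4 * ε₃ * ((1 - ε₁ - ε₃) + 4 * ε₁ * ε₃) * (1 - ε₃)) * h2
  have hEiffD : 0 ≤ K ^ 2 * ε₃ - SS * (1 - ε₃) * μ₁ ^ 2 ↔
      0 ≤ (1 - 2 * ε₃) * μ₃ - 2 * (1 - ε₃) * μ₂ :=
    sign19 hidE (mul_pos hbe hW)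
  have hU1iff : -(K / Real.sqrt SS) * Real.sqrt (ε₃ / (1 - ε₃)) ≤ μ₁ ↔
      2 * (1 - ε₃) * μ₂ ≤ (1 - 2 * ε₃) * μ₃ := by
    have ht0 : 0 ≤ Real.sqrt (ε₃ / (1 - ε₃)) := Real.sqrt_nonneg _
    constructor
    · intro h
      have h1' : -μ₁ ≤ K * Real.sqrt (ε₃ / (1 - ε₃)) / Real.sqrt SS := by
        rw [show -(K / Real.sqrt SS) * Real.sqrt (ε₃ / (1 - ε₃))
          = -(K * Real.sqrt (ε₃ / (1 - ε₃)) / Real.sqrt SS) by ring] at h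
        linarith only [h]
      have h1'' := (le_div_iff₀ hSqpos).1 h1'
      have h2' := pow_le_pow_left₀
        (mul_nonneg (by linarith only [hμ₁neg]) (Real.sqrt_nonneg _)) h1'' 2
      rw [mul_pow, mul_pow, hSq2, ht2] at h2'
      have h3' : (-μ₁) ^ 2 * SS * (1 - ε₃) ≤ K ^ 2 * ε₃ := by
        rw [show K ^ 2 * (ε₃ / (1 - ε₃)) = K ^ 2 * ε₃ / (1 - ε₃) by ring,
          le_div_iff₀ h1c] at h2'
        linarith only [h2']
      have hE : 0 ≤ K ^ 2 * ε₃ - SS * (1 - ε₃) * μ₁ ^ 2 := by linarith only [h3']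
      linarith only [hEiffD.1 hE]
    · intro hD
      have hE : 0 ≤ K ^ 2 * ε₃ - SS * (1 - ε₃) * μ₁ ^ 2 := hEiffD.2 (by linarith only [hD])
      have h2' : ((-μ₁) * Real.sqrt SS) ^ 2 ≤ (K * Real.sqrt (ε₃ / (1 - ε₃))) ^ 2 := by
        rw [mul_pow, mul_pow, hSq2, ht2, show K ^ 2 * (ε₃ / (1 - ε₃))
          = K ^ 2 * ε₃ / (1 - ε₃) by ring, le_div_iff₀ h1c]
        linarith only [hE]
      have h1' := unsq19 (mul_nonneg (by linarith only [hμ₁neg]) (Real.sqrt_nonneg _))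
        (mul_nonneg hKpos.le ht0) h2'
      have h1'' : -μ₁ ≤ K * Real.sqrt (ε₃ / (1 - ε₃)) / Real.sqrt SS :=
        (le_div_iff₀ hSqpos).2 h1'
      rw [show -(K / Real.sqrt SS) * Real.sqrt (ε₃ / (1 - ε₃))
        = -(K * Real.sqrt (ε₃ / (1 - ε₃)) / Real.sqrt SS) by ring]
      linarith only [h1'']
  -- ## assembling
  simp only [Set.mem_Icc]
  rw [← hK, ← hSS]
  constructor
  · rintro ⟨⟨hsl, hsr⟩, hs2m⟩
    have hD := hC1iff.1 hs2m
    refine ⟨hU1iff.2 hD, ?_⟩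
    have hGs2 : (1 - ε₃) * ((J s₂) ^ 2 - s₂ ^ 2) = ε₃ * μ₃ ^ 2 := by
      rw [hIb s₂ hs2m hs2le]
      linear_combination (-ε₃ * (2 * (1 - ε₃) * s₂ - (1 - 2 * ε₃) * μ₃)) * hs2'
    have h5 := hmin2 s₂
    have h6 := hGa sstar hsl hsr
    have e9 := mul_le_mul_of_nonneg_left h6 h1c.le
    have e10 := mul_le_mul_of_nonneg_left (mul_le_mul_of_nonneg_left h5 h1c.le) h1a.le
    have e8 : (1 - ε₁) * (ε₃ * μ₃ ^ 2) = (1 - ε₁) * ((1 - ε₃) * ((J s₂) ^ 2 - s₂ ^ 2)) := by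
      rw [hGs2]
    have hC2' : ε₃ * (1 - ε₁) * μ₃ ^ 2 ≤ ε₁ * (1 - ε₃) * μ₁ ^ 2 := by
      linarith only [e8, e9, e10]
    exact hU2iff.2 (hC2iff.1 hC2')
  · rintro ⟨hL, hR⟩
    have hD := hU1iff.1 hL
    have hs2m : μ₂ ≤ s₂ := hC1iff.2 hD
    have hC2' : ε₃ * (1 - ε₁) * μ₃ ^ 2 ≤ ε₁ * (1 - ε₃) * μ₁ ^ 2 := hC2iff.2 (hU2iff.1 hR)
    obtain ⟨s₁, hs₁def⟩ : ∃ s₁ : ℝ, s₁ = (1 - 2 * ε₁) * μ₁ / (2 * (1 - ε₁)) := ⟨_, rfl⟩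
    have hs1id : 2 * (1 - ε₁) * s₁ = (1 - 2 * ε₁) * μ₁ := by
      rw [hs₁def]; field_simp
    have hμ₁s₁ : μ₁ < s₁ := by
      have e : s₁ - μ₁ = -μ₁ / (2 * (1 - ε₁)) := by rw [hs₁def]; field_simp; ring
      have h9 : 0 < -μ₁ / (2 * (1 - ε₁)) :=
        div_pos (by linarith only [hμ₁neg]) (by linarith only [h1a])
      linarith only [e, h9]
    have hXY : 2 * ε₃ * (1 - ε₁) * μ₃ ≤ ((1 - ε₁ - ε₃) + 2 * ε₁ * ε₃) * (-μ₁) := by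
      have hsq2 : (2 * ε₃ * (1 - ε₁) * μ₃) ^ 2
          ≤ (((1 - ε₁ - ε₃) + 2 * ε₁ * ε₃) * (-μ₁)) ^ 2 := by
        have h9 := mul_le_mul_of_nonneg_left hC2'
          (by positivity : (0:ℝ) ≤ 4 * ε₃ * (1 - ε₁))
        linarith only [h9, sq_nonneg ((1 - ε₁ - ε₃) * μ₁)]
      refine unsq19 (by positivity) ?_ hsq2
      exact mul_nonneg (by linarith only [mul_pos hε₁ hε₃, hε₂])
        (by linarith only [hμ₁neg])
    have hT : 2 * (1 - ε₁) * (1 - ε₁ - ε₃) * (μ₂ - s₁)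
        = ((1 - ε₁ - ε₃) + 2 * ε₁ * ε₃) * (-μ₁) - 2 * ε₃ * (1 - ε₁) * μ₃ := by
      linear_combination (-(1 - ε₁ - ε₃)) * hs1id + (2 * (1 - ε₁)) * h1
    have hs₁μ₂ : s₁ ≤ μ₂ := by
      by_contra hcon
      push_neg at hcon
      have h9 := mul_neg_of_pos_of_neg
        (mul_pos (by linarith only [h1a] : (0:ℝ) < 2 * (1 - ε₁)) hε₂)
        (by linarith only [hcon] : μ₂ - s₁ < 0)
      linarith only [hT, hXY, h9]
    have hGs1 : (1 - ε₁) * ((J s₁) ^ 2 - s₁ ^ 2) = ε₁ * μ₁ ^ 2 := by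
      rw [hIa s₁ hμ₁s₁.le hs₁μ₂]
      linear_combination (-ε₁ * (2 * (1 - ε₁) * s₁ - (1 - 2 * ε₁) * μ₁)) * hs1id
    have hμ₁sq : 0 < μ₁ ^ 2 := by nlinarith only [hμ₁neg]
    have hGs1pos : 0 < (J s₁) ^ 2 - s₁ ^ 2 := by
      by_contra hcon
      push_neg at hcon
      have h9 := mul_nonpos_of_nonneg_of_nonpos h1a.le hcon
      linarith only [hGs1, mul_pos hε₁ hμ₁sq, h9]
    have hminJ : ∀ s : ℝ, (J s) ^ 2 - s ^ 2 ≤ (J s₁) ^ 2 - s₁ ^ 2 := by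
      intro s
      rcases le_total s μ₁ with h | h
      · rw [hG0 s h]
        linarith only [hGs1pos]
      · rcases le_total s μ₂ with h' | h'
        · have ha1 := hGa s h h'
          by_contra hcon
          push_neg at hcon
          have h9 := mul_lt_mul_of_pos_left hcon h1a
          linarith only [ha1, hGs1, h9]
        · rcases le_total s μ₃ with h'' | h''
          · have hb1 := hGb s h' h''
            by_contra hcon
            push_neg at hcon
            have e11 : (1 - ε₃) * ((1 - ε₁) * ((J s₁) ^ 2 - s₁ ^ 2))
                = (1 - ε₃) * (ε₁ * μ₁ ^ 2) := by rw [hGs1]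
            have e12 := mul_lt_mul_of_pos_left hcon (mul_pos h1a h1c)
            have e13 := mul_le_mul_of_nonneg_left hb1 h1a.le
            linarith only [hC2', e11, e12, e13]
          · rw [hG3 s h'']
            linarith only [hGs1pos]
    have hsstar_le : sstar ≤ s₁ := hleast2 s₁ hminJ
    have hμ₁sstar : μ₁ ≤ sstar := by
      by_contra hcon
      push_neg at hcon
      have h0 := hG0 sstar hcon.le
      have h5 := hmin2 s₁
      rw [h0] at h5
      linarith only [h5, hGs1pos]
    exact ⟨⟨hμ₁sstar, hsstar_le.trans hs₁μ₂⟩, hs2m⟩
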